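/- (Multiplicative property of Q.) Let (φ', ℓ') and (φ'', ℓ'') be gauge data with r' = φ'∘ℓ' and r'' = φ''∘ℓ'', let β' be a (φ', ℓ')-quasiperiodic family and β'' a (φ'', ℓ'')-quasiperiodic family with β'_1 = β''_0, and let μ be an assignment t ↦ μ_t of linear maps E → 𝔤, smooth in t, with μ_t = β'_{2t} for t ∈ [0, 1/2], μ_t = β''_{2t−1} for t ∈ [1/2, 1], and μ_{t+1} = (φ''∘φ')∘μ_t − (φ''∘r' + r'') for all t (the concatenation β''*β'). Then μ is quasiperiodic for the composite gauge datum (φ''∘φ', ℓ' + φ'⁻¹∘ℓ''), and for all x, y ∈ E: Q(μ)(x, y) = Q(β')(x, y) + Q(β'')(x, y) + (1/2)( ℓ'' ∧_B r' )(x, y). (The correction term is the value of the 2-form λ = (1/2) pr₁*θ^L · pr₂*θ^R on G × G pulled back by the pair of gauge transformations, as in the paper's Proposition on properties of Q.) -/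

import Mathlib

/-- `(a ∧_B b)(x, y) = B(a x, b y) - B(a y, b x)` for maps `a, b : E → 𝔤`. -/
def wedgeB {𝔤 E : Type*} [NormedAddCommGroup 𝔤] [NormedSpace ℝ 𝔤]
    [AddCommGroup E] [Module ℝ E]
    (B : 𝔤 →ₗ[ℝ] 𝔤 →ₗ[ℝ] ℝ) (a b : E → 𝔤) (x y : E) : ℝ :=
  B (a x) (b y) - B (a y) (b x)

/-- A `(φ, r)`-quasiperiodic family of linear maps `E → 𝔤`: smooth in `t` and
`β (t+1) = φ ∘ β t - r`. -/
def QuasiPeriodic {𝔤 E : Type*} [NormedAddCommGroup 𝔤] [NormedSpace ℝ 𝔤]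
    [AddCommGroup E] [Module ℝ E]
    (φ : 𝔤 → 𝔤) (r : E → 𝔤) (β : ℝ → E →ₗ[ℝ] 𝔤) : Prop :=
  (∀ x : E, ContDiff ℝ (⊤ : ℕ∞) (fun t => β t x)) ∧
  ∀ (t : ℝ) (x : E), β (t + 1) x = φ (β t x) - r x

/-- The functional `Q(β)(x,y) = (1/2)(ℓ ∧_B β_0)(x,y) + (1/2)∫₀¹ (β_t ∧_B β̇_t)(x,y) dt`. -/
noncomputable def Qfun {𝔤 E : Type*} [NormedAddCommGroup 𝔤] [NormedSpace ℝ 𝔤]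
    [AddCommGroup E] [Module ℝ E]
    (B : 𝔤 →ₗ[ℝ] 𝔤 →ₗ[ℝ] ℝ) (ℓ : E → 𝔤) (β : ℝ → E → 𝔤) (x y : E) : ℝ :=
  (1/2 : ℝ) * wedgeB B ℓ (β 0) x y
    + (1/2 : ℝ) * ∫ t in (0:ℝ)..1,
        wedgeB B (β t) (fun e => deriv (fun s => β s e) t) x y

section helpers

variable {𝔤 : Type*} [NormedAddCommGroup 𝔤] [NormedSpace ℝ 𝔤] [FiniteDimensional ℝ 𝔤]

lemma contB (B : 𝔤 →ₗ[ℝ] 𝔤 →ₗ[ℝ] ℝ) {f g : ℝ → 𝔤} (hf : Continuous f) (hg : Continuous g) :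
    Continuous fun t => B (f t) (g t) := by
  let Bc : 𝔤 →ₗ[ℝ] 𝔤 →L[ℝ] ℝ :=
    { toFun := fun a => LinearMap.toContinuousLinearMap (B a)
      map_add' := by intros; ext; simp
      map_smul' := by intros; ext; simp }
  have h1 : Continuous fun p : 𝔤 × 𝔤 => (LinearMap.toContinuousLinearMap Bc) p.1 p.2 :=
    (LinearMap.toContinuousLinearMap Bc).continuous₂
  have h2 : Continuous fun p : 𝔤 × 𝔤 => B p.1 p.2 := h1
  exact h2.comp (hf.prodMk hg)

omit [FiniteDimensional ℝ 𝔤] in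
lemma deriv_comp_two_mul (f : ℝ → 𝔤) (hf : ContDiff ℝ (⊤ : ℕ∞) f) (t : ℝ) :
    deriv (fun s => f (2 * s)) t = (2 : ℝ) • deriv f (2 * t) := by
  have h1 : HasDerivAt f (deriv f (2 * t)) (2 * t) :=
    (hf.differentiable (by norm_num) (2 * t)).hasDerivAt
  have h2 : HasDerivAt (fun s : ℝ => 2 * s) 2 t := by
    simpa using (hasDerivAt_id t).const_mul (2 : ℝ)
  simpa [smul_comm, Function.comp_def] using (h1.scomp t h2).deriv

omit [FiniteDimensional ℝ 𝔤] in
lemma deriv_comp_two_mul_sub_one (f : ℝ → 𝔤) (hf : ContDiff ℝ (⊤ : ℕ∞) f) (t : ℝ) :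
    deriv (fun s => f (2 * s - 1)) t = (2 : ℝ) • deriv f (2 * t - 1) := by
  have h1 : HasDerivAt f (deriv f (2 * t - 1)) (2 * t - 1) :=
    (hf.differentiable (by norm_num) (2 * t - 1)).hasDerivAt
  have h2 : HasDerivAt (fun s : ℝ => 2 * s - 1) 2 t := by
    simpa using ((hasDerivAt_id t).const_mul (2 : ℝ)).sub_const 1
  simpa [smul_comm, Function.comp_def] using (h1.scomp t h2).deriv

lemma ae_ne_real (a : ℝ) : ∀ᵐ s : ℝ, s ≠ a := by
  rw [MeasureTheory.ae_iff]
  simp only [ne_eq, not_not]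
  simpa [Set.setOf_eq_eq_singleton] using MeasureTheory.measure_singleton (μ := MeasureTheory.volume) a

end helpers

/-- multiplicative property of `Q`: for the concatenation
`μ = β'' * β'` of a `(φ', ℓ')`-quasiperiodic family `β'` and a
`(φ'', ℓ'')`-quasiperiodic family `β''` with `β'_1 = β''_0`, the family `μ` is
quasiperiodic for the composite gauge datum `(φ''∘φ', ℓ' + φ'⁻¹∘ℓ'')`, and
`Q(μ) = Q(β') + Q(β'') + (1/2)(ℓ'' ∧_B r')`, where `r' = φ'∘ℓ'`, `r'' = φ''∘ℓ''`. -/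
theorem Q_multiplicative
    {𝔤 E : Type*} [NormedAddCommGroup 𝔤] [NormedSpace ℝ 𝔤] [FiniteDimensional ℝ 𝔤]
    [AddCommGroup E] [Module ℝ E]
    (br : 𝔤 →ₗ[ℝ] 𝔤 →ₗ[ℝ] 𝔤)
    (br_alt : ∀ x : 𝔤, br x x = 0)
    (br_jacobi : ∀ x y z : 𝔤, br (br x y) z + br (br y z) x + br (br z x) y = 0)
    (B : 𝔤 →ₗ[ℝ] 𝔤 →ₗ[ℝ] ℝ)
    (B_symm : ∀ x y : 𝔤, B x y = B y x)
    (B_inv : ∀ x y z : 𝔤, B (br x y) z = B x (br y z))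
    (φ' φ'' : 𝔤 ≃ₗ[ℝ] 𝔤)
    (hφ'B : ∀ x y : 𝔤, B (φ' x) (φ' y) = B x y)
    (hφ''B : ∀ x y : 𝔤, B (φ'' x) (φ'' y) = B x y)
    (ℓ' ℓ'' : E →ₗ[ℝ] 𝔤)
    (β' β'' : ℝ → E →ₗ[ℝ] 𝔤)
    (hβ' : QuasiPeriodic ⇑φ' (fun x => φ' (ℓ' x)) β')
    (hβ'' : QuasiPeriodic ⇑φ'' (fun x => φ'' (ℓ'' x)) β'')
    (hmatch : ∀ x : E, β' 1 x = β'' 0 x)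
    (μ : ℝ → E →ₗ[ℝ] 𝔤)
    (hμ_smooth : ∀ x : E, ContDiff ℝ (⊤ : ℕ∞) (fun t => μ t x))
    (hμ_left : ∀ t ∈ Set.Icc (0 : ℝ) (1/2), ∀ x : E, μ t x = β' (2 * t) x)
    (hμ_right : ∀ t ∈ Set.Icc (1/2 : ℝ) 1, ∀ x : E, μ t x = β'' (2 * t - 1) x)
    (hμ_per : ∀ (t : ℝ) (x : E),
      μ (t + 1) x = φ'' (φ' (μ t x)) - (φ'' (φ' (ℓ' x)) + φ'' (ℓ'' x))) :
    QuasiPeriodic (fun z => φ'' (φ' z)) (fun x => φ'' (φ' (ℓ' x + φ'.symm (ℓ'' x)))) μ ∧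
    ∀ x y : E,
      Qfun B (fun e => ℓ' e + φ'.symm (ℓ'' e)) (fun t => ⇑(μ t)) x y
        = Qfun B ⇑ℓ' (fun t => ⇑(β' t)) x y + Qfun B ⇑ℓ'' (fun t => ⇑(β'' t)) x y
          + (1/2 : ℝ) * wedgeB B ⇑ℓ'' (fun e => φ' (ℓ' e)) x y := by
  constructor
  · refine ⟨hμ_smooth, fun t x => ?_⟩
    rw [hμ_per t x]
    simp [map_add, LinearEquiv.apply_symm_apply]
  intro x y
  -- continuity of the integrands
  have hc : ∀ (γ : ℝ → E →ₗ[ℝ] 𝔤), (∀ e : E, ContDiff ℝ (⊤ : ℕ∞) fun t => γ t e) →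
      Continuous fun t => wedgeB B (⇑(γ t)) (fun e => deriv (fun s => γ s e) t) x y := by
    intro γ hγ
    have c1 : ∀ e : E, Continuous fun t => γ t e := fun e => (hγ e).continuous
    have c2 : ∀ e : E, Continuous fun t => deriv (fun s => γ s e) t := fun e =>
      (hγ e).continuous_deriv (by norm_num)
    simp only [wedgeB]
    exact (contB B (c1 x) (c2 y)).sub (contB B (c1 y) (c2 x))
  have gcont : Continuous fun t => wedgeB B (⇑(μ t)) (fun e => deriv (fun s => μ s e) t) x y :=
    hc μ hμ_smooth
  have h1cont : Continuous fun t => wedgeB B (⇑(β' t)) (fun e => deriv (fun s => β' s e) t) x y :=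
    hc β' hβ'.1
  have h2cont : Continuous fun t => wedgeB B (⇑(β'' t)) (fun e => deriv (fun s => β'' s e) t) x y :=
    hc β'' hβ''.1
  -- pointwise identities on the open halves
  have keyL : ∀ t ∈ Set.Ioo (0:ℝ) (1/2),
      wedgeB B (⇑(μ t)) (fun e => deriv (fun s => μ s e) t) x y
        = 2 * wedgeB B (⇑(β' (2*t))) (fun e => deriv (fun s => β' s e) (2*t)) x y := by
    intro t ht
    have hval : ∀ e, μ t e = β' (2*t) e := fun e => hμ_left t ⟨ht.1.le, ht.2.le⟩ e
    have hder : ∀ e : E, deriv (fun s => μ s e) t = (2:ℝ) • deriv (fun s => β' s e) (2*t) := by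
      intro e
      have hev : (fun s => μ s e) =ᶠ[nhds t] fun s => β' (2*s) e := by
        filter_upwards [Ioo_mem_nhds ht.1 ht.2] with s hs
        exact hμ_left s ⟨hs.1.le, hs.2.le⟩ e
      rw [hev.deriv_eq]
      exact deriv_comp_two_mul (fun s => β' s e) (hβ'.1 e) t
    simp only [wedgeB, hval, hder, map_smul, smul_eq_mul, LinearMap.smul_apply]
    ring
  have keyR : ∀ t ∈ Set.Ioo (1/2:ℝ) 1,
      wedgeB B (⇑(μ t)) (fun e => deriv (fun s => μ s e) t) x y
        = 2 * wedgeB B (⇑(β'' (2*t-1))) (fun e => deriv (fun s => β'' s e) (2*t-1)) x y := by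
    intro t ht
    have hval : ∀ e, μ t e = β'' (2*t-1) e := fun e => hμ_right t ⟨ht.1.le, ht.2.le⟩ e
    have hder : ∀ e : E, deriv (fun s => μ s e) t = (2:ℝ) • deriv (fun s => β'' s e) (2*t-1) := by
      intro e
      have hev : (fun s => μ s e) =ᶠ[nhds t] fun s => β'' (2*s-1) e := by
        filter_upwards [Ioo_mem_nhds ht.1 ht.2] with s hs
        exact hμ_right s ⟨hs.1.le, hs.2.le⟩ e
      rw [hev.deriv_eq]
      exact deriv_comp_two_mul_sub_one (fun s => β'' s e) (hβ''.1 e) t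
    simp only [wedgeB, hval, hder, map_smul, smul_eq_mul, LinearMap.smul_apply]
    ring
  -- integral identity
  have hsplit : (∫ t in (0:ℝ)..1, wedgeB B (⇑(μ t)) (fun e => deriv (fun s => μ s e) t) x y)
      = (∫ t in (0:ℝ)..(1/2), wedgeB B (⇑(μ t)) (fun e => deriv (fun s => μ s e) t) x y)
        + ∫ t in (1/2:ℝ)..1, wedgeB B (⇑(μ t)) (fun e => deriv (fun s => μ s e) t) x y :=
    (intervalIntegral.integral_add_adjacent_intervals
      (gcont.intervalIntegrable _ _) (gcont.intervalIntegrable _ _)).symm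
  have hIL : (∫ t in (0:ℝ)..(1/2), wedgeB B (⇑(μ t)) (fun e => deriv (fun s => μ s e) t) x y)
      = ∫ t in (0:ℝ)..1, wedgeB B (⇑(β' t)) (fun e => deriv (fun s => β' s e) t) x y := by
    have step1 : (∫ t in (0:ℝ)..(1/2), wedgeB B (⇑(μ t)) (fun e => deriv (fun s => μ s e) t) x y)
        = ∫ t in (0:ℝ)..(1/2),
            2 * wedgeB B (⇑(β' (2*t))) (fun e => deriv (fun s => β' s e) (2*t)) x y := by
      apply intervalIntegral.integral_congr_ae
      filter_upwards [ae_ne_real (1/2)] with s hs hmem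
      rw [Set.uIoc_of_le (by norm_num)] at hmem
      exact keyL s ⟨hmem.1, lt_of_le_of_ne hmem.2 hs⟩
    rw [step1, intervalIntegral.integral_const_mul,
      intervalIntegral.integral_comp_mul_left
        (fun u => wedgeB B (⇑(β' u)) (fun e => deriv (fun s => β' s e) u) x y) two_ne_zero]
    norm_num
    ring
  have hIR : (∫ t in (1/2:ℝ)..1, wedgeB B (⇑(μ t)) (fun e => deriv (fun s => μ s e) t) x y)
      = ∫ t in (0:ℝ)..1, wedgeB B (⇑(β'' t)) (fun e => deriv (fun s => β'' s e) t) x y := by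
    have step1 : (∫ t in (1/2:ℝ)..1, wedgeB B (⇑(μ t)) (fun e => deriv (fun s => μ s e) t) x y)
        = ∫ t in (1/2:ℝ)..1,
            2 * wedgeB B (⇑(β'' (2*t-1))) (fun e => deriv (fun s => β'' s e) (2*t-1)) x y := by
      apply intervalIntegral.integral_congr_ae
      filter_upwards [ae_ne_real 1] with s hs hmem
      rw [Set.uIoc_of_le (by norm_num)] at hmem
      exact keyR s ⟨hmem.1, lt_of_le_of_ne hmem.2 hs⟩
    have step2 : (fun t : ℝ =>
        wedgeB B (⇑(β'' (2*t-1))) (fun e => deriv (fun s => β'' s e) (2*t-1)) x y)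
        = fun t : ℝ =>
            (fun u => wedgeB B (⇑(β'' u)) (fun e => deriv (fun s => β'' s e) u) x y) (2*t + (-1)) := by
      funext t
      norm_num [sub_eq_add_neg]
    rw [step1, intervalIntegral.integral_const_mul, step2,
      intervalIntegral.integral_comp_mul_add
        (fun u => wedgeB B (⇑(β'' u)) (fun e => deriv (fun s => β'' s e) u) x y) two_ne_zero (-1)]
    norm_num
    ring
  -- boundary term identity
  have hb : wedgeB B (fun e => ℓ' e + φ'.symm (ℓ'' e)) (⇑(μ 0)) x y
      = wedgeB B ⇑ℓ' (⇑(β' 0)) x y + wedgeB B ⇑ℓ'' (⇑(β'' 0)) x y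
        + wedgeB B ⇑ℓ'' (fun e => φ' (ℓ' e)) x y := by
    have hμ0 : ∀ e, μ 0 e = β' 0 e := by
      intro e; simpa using hμ_left 0 ⟨le_refl 0, by norm_num⟩ e
    have hβ''0 : ∀ e, β'' 0 e = φ' (β' 0 e) - φ' (ℓ' e) := by
      intro e; rw [← hmatch e]
      have := hβ'.2 0 e
      simpa using this
    have hsymm : ∀ (a b : 𝔤), B (φ'.symm a) b = B a (φ' b) := by
      intro a b
      rw [← hφ'B (φ'.symm a) b, LinearEquiv.apply_symm_apply]
    simp only [wedgeB, hμ0, hβ''0, map_add, map_sub, LinearMap.add_apply, LinearMap.sub_apply,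
      hsymm]
    ring
  simp only [Qfun]
  rw [hsplit, hIL, hIR, hb]
  ring
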